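/- Let κ_1, …, κ_n > 0 and κ(x) = ∑_{i=1}^n κ_i x_i². For real numbers α, β < n/2 + 1 and σ < t, and any x, y ∈ ℝⁿ: ∫_σ^t ∫_{ℝⁿ} (t-τ)^{-α} exp(-κ(x-ξ)/(4(t-τ))) · (τ-σ)^{-β} exp(-κ(ξ-y)/(4(τ-σ))) dξ dτ = (4π)^{n/2} (∏_i κ_i)^{-1/2} · B(n/2 - α + 1, n/2 - β + 1) · (t-σ)^{n/2+1-α-β} · exp(-κ(x-y)/(4(t-σ))), where B is the Beta function. -/

import Mathlib

open Real Finset MeasureTheory intervalIntegral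

lemma gauss1d (a b x y : ℝ) (ha : 0 < a) (hb : 0 < b) :
    ∫ ξ : ℝ, Real.exp (-(a * (x - ξ) ^ 2)) * Real.exp (-(b * (ξ - y) ^ 2)) =
      Real.sqrt (π / (a + b)) * Real.exp (-(a * b / (a + b) * (x - y) ^ 2)) := by
  have hab : 0 < a + b := by linarith
  have key : ∀ ξ : ℝ, Real.exp (-(a * (x - ξ) ^ 2)) * Real.exp (-(b * (ξ - y) ^ 2)) =
      Real.exp (-((a + b) * (ξ - (a * x + b * y) / (a + b)) ^ 2)) *
        Real.exp (-(a * b / (a + b) * (x - y) ^ 2)) := by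
    intro ξ
    rw [← Real.exp_add, ← Real.exp_add]
    congr 1
    field_simp
    ring
  simp_rw [key]
  rw [MeasureTheory.integral_mul_const]
  congr 1
  rw [integral_sub_right_eq_self (fun ξ : ℝ => Real.exp (-((a + b) * ξ ^ 2)))
      ((a * x + b * y) / (a + b))]
  simp_rw [neg_mul_eq_neg_mul]
  exact integral_gaussian (a + b)

lemma gaussN (n : ℕ) (κ : Fin n → ℝ) (hκ : ∀ i, 0 < κ i) (p q : ℝ) (hp : 0 < p)
    (hq : 0 < q) (x y : Fin n → ℝ) :
    ∫ ξ : Fin n → ℝ, Real.exp (-(∑ i, κ i * (x i - ξ i) ^ 2) / (4 * p)) *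
        Real.exp (-(∑ i, κ i * (ξ i - y i) ^ 2) / (4 * q)) =
      (4 * π * p * q / (p + q)) ^ ((n : ℝ) / 2) * (∏ i, κ i) ^ (-(1 : ℝ) / 2) *
        Real.exp (-(∑ i, κ i * (x i - y i) ^ 2) / (4 * (p + q))) := by
  have hpq : 0 < p + q := by linarith
  have key : ∀ ξ : Fin n → ℝ,
      Real.exp (-(∑ i, κ i * (x i - ξ i) ^ 2) / (4 * p)) *
        Real.exp (-(∑ i, κ i * (ξ i - y i) ^ 2) / (4 * q)) =
      ∏ i, (Real.exp (-(κ i / (4 * p) * (x i - ξ i) ^ 2)) *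
        Real.exp (-(κ i / (4 * q) * (ξ i - y i) ^ 2))) := by
    intro ξ
    rw [Finset.prod_mul_distrib, ← Real.exp_sum, ← Real.exp_sum]
    congr 1
    · congr 1
      rw [neg_div, Finset.sum_div, ← Finset.sum_neg_distrib]
      exact Finset.sum_congr rfl fun i _ => by ring
    · congr 1
      rw [neg_div, Finset.sum_div, ← Finset.sum_neg_distrib]
      exact Finset.sum_congr rfl fun i _ => by ring
  simp_rw [key]
  rw [MeasureTheory.integral_fintype_prod_volume_eq_prod (ι := Fin n)
      (fun i z => Real.exp (-(κ i / (4 * p) * (x i - z) ^ 2)) *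
        Real.exp (-(κ i / (4 * q) * (z - y i) ^ 2)))]
  have hInt : ∀ i, (∫ z : ℝ, Real.exp (-(κ i / (4 * p) * (x i - z) ^ 2)) *
      Real.exp (-(κ i / (4 * q) * (z - y i) ^ 2))) =
      Real.sqrt ((4 * π * p * q / (p + q)) / κ i) *
        Real.exp (-(κ i / (4 * (p + q)) * (x i - y i) ^ 2)) := by
    intro i
    have hκi := hκ i
    rw [gauss1d _ _ _ _ (by positivity) (by positivity)]
    have h1 : π / (κ i / (4 * p) + κ i / (4 * q)) = (4 * π * p * q / (p + q)) / κ i := by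
      field_simp
      ring
    have h2 : (κ i / (4 * p)) * (κ i / (4 * q)) / (κ i / (4 * p) + κ i / (4 * q)) =
        κ i / (4 * (p + q)) := by
      have hp' : p ≠ 0 := hp.ne'
      have hq' : q ≠ 0 := hq.ne'
      have hpq' : p + q ≠ 0 := hpq.ne'
      have hκ' : κ i ≠ 0 := hκi.ne'
      field_simp
      ring
    rw [h1, h2]
  rw [Finset.prod_congr rfl fun i _ => hInt i, Finset.prod_mul_distrib]
  have hC : (0:ℝ) ≤ 4 * π * p * q / (p + q) := by positivity
  congr 1
  · rw [Finset.prod_congr rfl fun i _ => by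
      rw [Real.sqrt_eq_rpow, Real.div_rpow hC (hκ i).le, div_eq_mul_inv,
        ← Real.rpow_neg (hκ i).le, ← neg_div] ]
    rw [Finset.prod_mul_distrib, Finset.prod_const, Finset.card_univ, Fintype.card_fin,
      ← Real.rpow_natCast ((4 * π * p * q / (p + q)) ^ ((1:ℝ)/2)) n, ← Real.rpow_mul hC,
      ← Real.finset_prod_rpow _ _ (fun i _ => (hκ i).le),
      show (1:ℝ)/2*(n:ℝ) = (n:ℝ)/2 from by ring]
  · rw [← Real.exp_sum]
    congr 1
    rw [neg_div, Finset.sum_div, ← Finset.sum_neg_distrib]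
    exact Finset.sum_congr rfl fun i _ => by ring

lemma subst_lemma (a b σ t : ℝ) (hσt : σ < t) :
    ∫ τ in Set.Ioo σ t, (t - τ) ^ a * (τ - σ) ^ b =
      (t - σ) ^ (a + b + 1) * ∫ u in (0:ℝ)..1, u ^ a * (1 - u) ^ b := by
  have hT : (0:ℝ) < t - σ := by linarith
  have hT' : t - σ ≠ 0 := hT.ne'
  rw [← MeasureTheory.integral_Ioc_eq_integral_Ioo,
    ← intervalIntegral.integral_of_le hσt.le]
  have h1 : (∫ τ in σ..t, (t - τ) ^ a * (τ - σ) ^ b) =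
      ∫ s in (0:ℝ)..(t - σ), s ^ a * ((t - σ) - s) ^ b := by
    have := intervalIntegral.integral_comp_sub_left
      (fun s => s ^ a * ((t - σ) - s) ^ b) t (a := σ) (b := t)
    simp only [sub_self] at this
    rw [← this]
    apply intervalIntegral.integral_congr
    intro τ _
    show (t - τ) ^ a * (τ - σ) ^ b = (t - τ) ^ a * (t - σ - (t - τ)) ^ b
    have : t - σ - (t - τ) = τ - σ := by ring
    rw [this]
  rw [h1]
  have h2 : (∫ s in (0:ℝ)..(t - σ), s ^ a * ((t - σ) - s) ^ b) =
      (t - σ) * ∫ u in (0:ℝ)..1, (u * (t - σ)) ^ a * ((t - σ) - u * (t - σ)) ^ b := by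
    rw [intervalIntegral.integral_comp_mul_right
      (fun s => s ^ a * ((t - σ) - s) ^ b) hT']
    simp only [smul_eq_mul, zero_mul, one_mul]
    rw [← mul_assoc, mul_inv_cancel₀ hT', one_mul]
  rw [h2]
  have h3 : (∫ u in (0:ℝ)..1, (u * (t - σ)) ^ a * ((t - σ) - u * (t - σ)) ^ b) =
      ((t - σ) ^ a * (t - σ) ^ b) * ∫ u in (0:ℝ)..1, u ^ a * (1 - u) ^ b := by
    rw [← intervalIntegral.integral_const_mul]
    apply intervalIntegral.integral_congr
    intro u hu
    rw [Set.uIcc_of_le (by norm_num : (0:ℝ) ≤ 1)] at hu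
    have hu0 : 0 ≤ u := hu.1
    have hu1 : u ≤ 1 := hu.2
    have e1 : (u * (t - σ)) ^ a = u ^ a * (t - σ) ^ a :=
      Real.mul_rpow hu0 hT.le
    have e2 : ((t - σ) - u * (t - σ)) ^ b = (1 - u) ^ b * (t - σ) ^ b := by
      rw [show (t - σ) - u * (t - σ) = (1 - u) * (t - σ) by ring]
      exact Real.mul_rpow (by linarith) hT.le
    show (u * (t - σ)) ^ a * ((t - σ) - u * (t - σ)) ^ b =
      (t - σ) ^ a * (t - σ) ^ b * (u ^ a * (1 - u) ^ b)
    rw [e1, e2]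
    ring
  rw [h3, ← mul_assoc]
  congr 1
  rw [Real.rpow_add hT, Real.rpow_add hT, Real.rpow_one]
  ring

theorem stmt8 (n : ℕ) (κ : Fin n → ℝ) (hκ : ∀ i, 0 < κ i) (α β σ t : ℝ)
    (hα : α < n / 2 + 1) (hβ : β < n / 2 + 1) (hσt : σ < t) (x y : Fin n → ℝ) :
    (∫ τ in Set.Ioo σ t, ∫ ξ : Fin n → ℝ,
        (t - τ) ^ (-α) * Real.exp (-(∑ i, κ i * (x i - ξ i) ^ 2) / (4 * (t - τ))) *
          ((τ - σ) ^ (-β) *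
            Real.exp (-(∑ i, κ i * (ξ i - y i) ^ 2) / (4 * (τ - σ))))) =
      (4 * Real.pi) ^ ((n : ℝ) / 2) * (∏ i, κ i) ^ (-(1 : ℝ) / 2) *
        (∫ u in (0 : ℝ)..1, u ^ ((n : ℝ) / 2 - α) * (1 - u) ^ ((n : ℝ) / 2 - β)) *
        (t - σ) ^ ((n : ℝ) / 2 + 1 - α - β) *
        Real.exp (-(∑ i, κ i * (x i - y i) ^ 2) / (4 * (t - σ))) := by
  have hT : (0:ℝ) < t - σ := by linarith
  set E : ℝ := Real.exp (-(∑ i, κ i * (x i - y i) ^ 2) / (4 * (t - σ))) with hE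
  set K : ℝ := (4 * Real.pi) ^ ((n : ℝ) / 2) * (∏ i, κ i) ^ (-(1 : ℝ) / 2) *
      (t - σ) ^ (-((n : ℝ) / 2)) * E with hK
  have key : ∀ τ ∈ Set.Ioo σ t,
      (∫ ξ : Fin n → ℝ,
        (t - τ) ^ (-α) * Real.exp (-(∑ i, κ i * (x i - ξ i) ^ 2) / (4 * (t - τ))) *
          ((τ - σ) ^ (-β) *
            Real.exp (-(∑ i, κ i * (ξ i - y i) ^ 2) / (4 * (τ - σ))))) =
      K * ((t - τ) ^ ((n : ℝ) / 2 - α) * (τ - σ) ^ ((n : ℝ) / 2 - β)) := by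
    intro τ hτ
    have hp : (0:ℝ) < t - τ := by linarith [hτ.2]
    have hq : (0:ℝ) < τ - σ := by linarith [hτ.1]
    have step1 : (fun ξ : Fin n → ℝ =>
        (t - τ) ^ (-α) * Real.exp (-(∑ i, κ i * (x i - ξ i) ^ 2) / (4 * (t - τ))) *
          ((τ - σ) ^ (-β) *
            Real.exp (-(∑ i, κ i * (ξ i - y i) ^ 2) / (4 * (τ - σ))))) =
        fun ξ : Fin n → ℝ => ((t - τ) ^ (-α) * (τ - σ) ^ (-β)) *
          (Real.exp (-(∑ i, κ i * (x i - ξ i) ^ 2) / (4 * (t - τ))) *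
            Real.exp (-(∑ i, κ i * (ξ i - y i) ^ 2) / (4 * (τ - σ)))) :=
      funext fun ξ => by ring
    rw [step1, MeasureTheory.integral_const_mul,
      gaussN n κ hκ (t - τ) (τ - σ) hp hq x y,
      show (t - τ) + (τ - σ) = t - σ by ring]
    rw [Real.div_rpow (by positivity) hT.le,
      show (4 * π * (t - τ) * (τ - σ)) = ((4 * π) * (t - τ)) * (τ - σ) by ring,
      Real.mul_rpow (by positivity) hq.le, Real.mul_rpow (by positivity) hp.le]
    rw [hK, hE]
    have e1 : (t - τ) ^ (-α) * (t - τ) ^ ((n:ℝ)/2) = (t - τ) ^ ((n:ℝ)/2 - α) := by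
      rw [← Real.rpow_add hp]; congr 1; ring
    have e2 : (τ - σ) ^ (-β) * (τ - σ) ^ ((n:ℝ)/2) = (τ - σ) ^ ((n:ℝ)/2 - β) := by
      rw [← Real.rpow_add hq]; congr 1; ring
    have e3 : ((t - σ) ^ ((n:ℝ)/2))⁻¹ = (t - σ) ^ (-((n:ℝ)/2)) := by
      rw [← Real.rpow_neg hT.le]
    rw [div_eq_mul_inv, e3, ← e1, ← e2]
    ring
  rw [MeasureTheory.setIntegral_congr_fun measurableSet_Ioo key,
    MeasureTheory.integral_const_mul, subst_lemma _ _ _ _ hσt, hK]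
  have e4 : (t - σ) ^ (-((n:ℝ)/2)) * (t - σ) ^ (((n:ℝ)/2 - α) + ((n:ℝ)/2 - β) + 1) =
      (t - σ) ^ ((n:ℝ)/2 + 1 - α - β) := by
    rw [← Real.rpow_add hT]; congr 1; push_cast; ring
  calc (4 * Real.pi) ^ ((n : ℝ) / 2) * (∏ i, κ i) ^ (-(1 : ℝ) / 2) *
        (t - σ) ^ (-((n : ℝ) / 2)) * E *
        ((t - σ) ^ (((n:ℝ)/2 - α) + ((n:ℝ)/2 - β) + 1) *
          ∫ u in (0:ℝ)..1, u ^ ((n:ℝ)/2 - α) * (1 - u) ^ ((n:ℝ)/2 - β))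
      = (4 * Real.pi) ^ ((n : ℝ) / 2) * (∏ i, κ i) ^ (-(1 : ℝ) / 2) *
        (∫ u in (0:ℝ)..1, u ^ ((n:ℝ)/2 - α) * (1 - u) ^ ((n:ℝ)/2 - β)) *
        ((t - σ) ^ (-((n:ℝ)/2)) * (t - σ) ^ (((n:ℝ)/2 - α) + ((n:ℝ)/2 - β) + 1)) * E := by
        ring
    _ = _ := by rw [e4]
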